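/- The unique critical point of the circular Poiseuille function U^P on (R₁,R₂) is R₀ = sqrt((R₂²−R₁²)/(2 log(R₂/R₁))), and it satisfies R₁ < R₀ < (R₁+R₂)/2. -/

import Mathlib

open Real Set

lemma aux_log_lower (t : ℝ) (ht : 1 < t) : 2 * (t - 1) < (t + 1) * Real.log t := by
  set g : ℝ → ℝ := fun x => (x + 1) * Real.log x - 2 * (x - 1) with hg
  have hderiv : ∀ x ∈ interior (Ici (1 : ℝ)), 0 < deriv g x := by
    intro x hx
    rw [interior_Ici] at hx
    have hx1 : (1 : ℝ) < x := hx
    have hx0 : (0 : ℝ) < x := by linarith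
    have h1 : HasDerivAt g (1 * Real.log x + (x + 1) * x⁻¹ - 2 * 1) x := by
      exact (((hasDerivAt_id x).add_const 1).mul (Real.hasDerivAt_log hx0.ne')).sub
        (((hasDerivAt_id x).sub_const 1).const_mul 2)
    rw [h1.deriv]
    have hlog : Real.log x⁻¹ < x⁻¹ - 1 :=
      Real.log_lt_sub_one_of_pos (by positivity) (by
        intro h; rw [inv_eq_one] at h; linarith)
    rw [Real.log_inv] at hlog
    have hlog' : 1 - x⁻¹ < Real.log x := by linarith
    have hxi : (x + 1) * x⁻¹ = 1 + x⁻¹ := by field_simp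
    rw [hxi]
    linarith
  have hcont : ContinuousOn g (Ici 1) := by
    apply ContinuousOn.sub
    · exact (continuous_id.add continuous_const).continuousOn.mul
        (Real.continuousOn_log.mono (by intro x hx; simp at hx ⊢; intro h; rw [h] at hx; linarith))
    · exact ((continuous_const.mul (continuous_id.sub continuous_const))).continuousOn
  have hmono := strictMonoOn_of_deriv_pos (convex_Ici 1) hcont hderiv
  have := hmono (self_mem_Ici) (le_of_lt ht : (1:ℝ) ≤ t) ht
  simp only [hg, Real.log_one] at this
  linarith

theorem poiseuille_critical_point (R₁ R₂ : ℝ) (hR₁ : 0 < R₁) (hR : R₁ < R₂)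
    (UP : ℝ → ℝ)
    (hUP : ∀ ρ, UP ρ =
      1 / 4 * (ρ ^ 2 - R₁ ^ 2 - (R₂ ^ 2 - R₁ ^ 2) / Real.log (R₂ / R₁) * Real.log (ρ / R₁)))
    (R₀ : ℝ)
    (hR₀ : R₀ = Real.sqrt ((R₂ ^ 2 - R₁ ^ 2) / (2 * Real.log (R₂ / R₁)))) :
    R₀ ∈ Ioo R₁ R₂ ∧ deriv UP R₀ = 0 ∧
    (∀ ρ ∈ Ioo R₁ R₂, deriv UP ρ = 0 → ρ = R₀) ∧
    R₁ < R₀ ∧ R₀ < (R₁ + R₂) / 2 := by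
  have hR₂ : 0 < R₂ := lt_trans hR₁ hR
  set t : ℝ := R₂ / R₁ with htdef
  have ht : 1 < t := (one_lt_div hR₁).mpr hR
  have hR2t : R₂ = t * R₁ := by rw [htdef]; field_simp
  set L : ℝ := Real.log (R₂ / R₁) with hLdef
  have hL : 0 < L := Real.log_pos ht
  set C : ℝ := (R₂ ^ 2 - R₁ ^ 2) / L with hCdef
  -- key scalar inequalities
  have hlog1 : L < t - 1 := Real.log_lt_sub_one_of_pos (by positivity) (ne_of_gt ht)
  have haux : 2 * (t - 1) < (t + 1) * L := aux_log_lower t ht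
  -- X = (R₂² - R₁²)/(2L)
  set X : ℝ := (R₂ ^ 2 - R₁ ^ 2) / (2 * L) with hXdef
  have hXC : X = C / 2 := by rw [hXdef, hCdef]; ring
  have hA1 : R₁ ^ 2 < X := by
    rw [hXdef, lt_div_iff₀ (by positivity)]
    nlinarith [sq_nonneg (t - 1), sq_nonneg R₁, mul_pos hR₁ hR₁]
  have hA2 : X < ((R₁ + R₂) / 2) ^ 2 := by
    rw [hXdef, div_lt_iff₀ (by positivity)]
    have key := mul_lt_mul_of_pos_right haux (show (0:ℝ) < (t + 1) * R₁ ^ 2 / 2 by positivity)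
    rw [hR2t]
    nlinarith [key]
  have hXpos : 0 < X := lt_trans (by positivity) hA1
  have hR₀sq : R₀ ^ 2 = X := by
    rw [hR₀, Real.sq_sqrt hXpos.le]
  have hR₀pos : 0 < R₀ := by
    rw [hR₀]; exact Real.sqrt_pos.mpr hXpos
  have hR₀gt : R₁ < R₀ := by nlinarith
  have hR₀lt : R₀ < (R₁ + R₂) / 2 := by nlinarith
  have hR₀ltR₂ : R₀ < R₂ := by linarith
  -- derivative formula
  have hderiv : ∀ ρ : ℝ, 0 < ρ → deriv UP ρ = 1 / 4 * (2 * ρ - C / ρ) := by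
    intro ρ hρ
    have heq : UP =ᶠ[nhds ρ]
        fun x => 1 / 4 * (x ^ 2 - R₁ ^ 2 - C * (Real.log x - Real.log R₁)) := by
      filter_upwards [Ioi_mem_nhds hρ] with x hx
      rw [hUP, Real.log_div (ne_of_gt hx) hR₁.ne']
    rw [heq.deriv_eq]
    have h1 : HasDerivAt
        (fun x : ℝ => 1 / 4 * (x ^ 2 - R₁ ^ 2 - C * (Real.log x - Real.log R₁)))
        (1 / 4 * (2 * ρ - C / ρ)) ρ := by
      have := (((hasDerivAt_pow 2 ρ).sub_const (R₁ ^ 2)).sub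
        (((Real.hasDerivAt_log hρ.ne').sub_const (Real.log R₁)).const_mul C)).const_mul (1/4)
      refine this.congr_deriv ?_
      have : ρ ≠ 0 := hρ.ne'
      have : ρ ≠ 0 := hρ.ne'
      norm_num [div_eq_mul_inv]
    exact h1.deriv
  have hC2 : C = 2 * R₀ ^ 2 := by rw [hR₀sq, hXC]; ring
  refine ⟨⟨hR₀gt, hR₀ltR₂⟩, ?_, ?_, hR₀gt, hR₀lt⟩
  · rw [hderiv R₀ hR₀pos, hC2]
    field_simp
    ring
  · intro ρ hρ hdz
    have hρpos : 0 < ρ := lt_trans hR₁ hρ.1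
    rw [hderiv ρ hρpos] at hdz
    have hρne : ρ ≠ 0 := hρpos.ne'
    have h0 : 2 * ρ - C / ρ = 0 := by linarith
    have h1 : C = 2 * ρ ^ 2 := by
      field_simp at h0
      nlinarith [h0]
    have h2 : ρ ^ 2 = R₀ ^ 2 := by linarith
    have h3 : (ρ - R₀) * (ρ + R₀) = 0 := by linear_combination h2
    rcases mul_eq_zero.mp h3 with h | h
    · linarith
    · linarith
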